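/- Let S be a Noetherian domain with quotient field K, let 𝔞_• and 𝔟_• be graded families of nonzero ideals in S, and let v be a valuation of K supported on S such that v̂(𝔟_•) > 0. Then v̂(𝔟_•)/v̂(𝔞_•) ≤ ρ̂(𝔞_•, 𝔟̄_•). Moreover, if v̂(𝔞_•) = 0, then ρ̂(𝔞_•, 𝔟̄_•) = ∞. -/

import Mathlib

open Filter Polynomial
open scoped ENNReal NNReal

set_option synthInstance.maxHeartbeats 1000000
set_option maxHeartbeats 1000000

universe u

section Preamble

variable {S : Type u} [CommRing S]

/-- A graded family of ideals: `a 0 = S` and `a p * a q ⊆ a (p + q)` for all `p, q`. -/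
def GradedFamily (a : ℕ → Ideal S) : Prop :=
  a 0 = ⊤ ∧ ∀ p q : ℕ, a p * a q ≤ a (p + q)

/-- A filtration of ideals: a graded family which is descending. -/
def IdealFiltration (a : ℕ → Ideal S) : Prop :=
  GradedFamily a ∧ ∀ p : ℕ, a (p + 1) ≤ a p

/-- The integral closure of an ideal `I`: the ideal of all elements `x` satisfying an
equation of integral dependence `x ^ n + c 1 * x ^ (n - 1) + ⋯ + c n = 0` with `c i ∈ I ^ i`. -/
noncomputable def intClosure (I : Ideal S) : Ideal S :=
  Ideal.span {x : S | ∃ n : ℕ, 0 < n ∧ ∃ c : ℕ → S,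
    (∀ i, 1 ≤ i → i ≤ n → c i ∈ I ^ i) ∧
    x ^ n + ∑ i ∈ Finset.Icc 1 n, c i * x ^ (n - i) = 0}

/-- The resurgence `ρ(a, b) = sup { s / r : ¬ a s ⊆ b r }` (as an extended real number,
with `sSup ∅ = ⊥`). -/
noncomputable def resurgence (a b : ℕ → Ideal S) : EReal :=
  sSup {x : EReal | ∃ s r : ℕ, 0 < s ∧ 0 < r ∧ ¬ a s ≤ b r ∧
    x = (((s : ℝ) / (r : ℝ) : ℝ) : EReal)}

/-- The asymptotic resurgence `ρ̂(a, b) = sup { s / r : ¬ a (s*t) ⊆ b (r*t) for all t ≫ 1}`. -/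
noncomputable def asympResurgence (a b : ℕ → Ideal S) : EReal :=
  sSup {x : EReal | ∃ s r : ℕ, 0 < s ∧ 0 < r ∧
    (∀ᶠ t : ℕ in atTop, ¬ a (s * t) ≤ b (r * t)) ∧
    x = (((s : ℝ) / (r : ℝ) : ℝ) : EReal)}

/-- The `k`-th Veronese subalgebra of the Rees algebra of the graded family `b` is a
standard graded `S`-algebra, i.e. `b (k*n) = (b k) ^ n` for all `n ≥ 1`. -/
def StdVeronese (b : ℕ → Ideal S) (k : ℕ) : Prop :=
  ∀ n : ℕ, 1 ≤ n → b (k * n) = b k ^ n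

/-- The Rees algebra `ℛ(b) = ⊕ₙ bₙ tⁿ ⊆ S[t]` of a graded family, as a set of polynomials. -/
def ReesSet (b : ℕ → Ideal S) : Set (Polynomial S) :=
  {p : Polynomial S | ∀ n : ℕ, p.coeff n ∈ b n}

/-- `ℛ(b')` is a finitely generated `ℛ(b)`-module: there is a finite set `G ⊆ ℛ(b')`
such that every element of `ℛ(b')` is an `ℛ(b)`-linear combination of elements of `G`. -/
def ReesFGModule (b b' : ℕ → Ideal S) : Prop :=
  ∃ G : Finset (Polynomial S), (G : Set (Polynomial S)) ⊆ ReesSet b' ∧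
    ∀ p ∈ ReesSet b', ∃ c : Polynomial S → Polynomial S,
      (∀ g ∈ G, c g ∈ ReesSet b) ∧ p = ∑ g ∈ G, c g * g

/-- A graded family `b` is `bb`-equivalent (for an ideal `bb`) if for some `k`,
`b (i + k) ⊆ bb ^ i ⊆ b i` for all `i ≥ 1`. -/
def BEquivalent (bb : Ideal S) (b : ℕ → Ideal S) : Prop :=
  ∃ k : ℕ, ∀ i : ℕ, 1 ≤ i → b (i + k) ≤ bb ^ i ∧ bb ^ i ≤ b i

/-- `β_n(a, b) = inf { d ≥ 1 : ¬ a n ⊆ b d }`, with `inf ∅ = ∞`. -/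
noncomputable def betaIdx (a b : ℕ → Ideal S) (n : ℕ) : ℕ∞ :=
  sInf {d : ℕ∞ | ∃ m : ℕ, 0 < m ∧ ¬ a n ≤ b m ∧ d = (m : ℕ∞)}

/-- `ρ^n(a, b) = sup { s / β_s(a, b) : s ≥ n, β_s(a, b) < ∞ }`. -/
noncomputable def rhoN (a b : ℕ → Ideal S) (n : ℕ) : EReal :=
  sSup {x : EReal | ∃ s d : ℕ, n ≤ s ∧ 0 < s ∧ betaIdx a b s = (d : ℕ∞) ∧
    x = (((s : ℝ) / (d : ℝ) : ℝ) : EReal)}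

/-- `ρ^lim(a, b) = lim_{n → ∞} ρ^n(a, b)`, the limit of the nonincreasing sequence `ρ^n`,
i.e. its infimum. -/
noncomputable def rhoLim (a b : ℕ → Ideal S) : EReal :=
  ⨅ n : ℕ, rhoN a b n

end Preamble

section Valuations

variable {S : Type u} [CommRing S] [IsDomain S]

/-- A (discrete) valuation of the quotient field `K` of `S`: a function `v : K → ℤ` with
`v (x * y) = v x + v y` and `v (x + y) ≥ min (v x) (v y)` (for nonzero elements). -/
structure ValuationOn (S : Type u) [CommRing S] [IsDomain S] where
  v : FractionRing S → ℤ
  map_mul : ∀ x y : FractionRing S, x ≠ 0 → y ≠ 0 → v (x * y) = v x + v y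
  min_le_map_add : ∀ x y : FractionRing S, x ≠ 0 → y ≠ 0 → x + y ≠ 0 →
    min (v x) (v y) ≤ v (x + y)

/-- A valuation of the quotient field is supported on `S` if it is nonnegative on `S`. -/
def ValuationOn.Supported (w : ValuationOn S) : Prop :=
  ∀ x : S, x ≠ 0 → 0 ≤ w.v (algebraMap S (FractionRing S) x)

/-- `v(I) = min { v x : x ∈ I, x ≠ 0 }`. -/
noncomputable def idealVal (w : ValuationOn S) (I : Ideal S) : ℤ :=
  sInf {m : ℤ | ∃ x ∈ I, x ≠ 0 ∧ w.v (algebraMap S (FractionRing S) x) = m}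

/-- The skew Waldschmidt constant `v̂(a) = inf_{n ≥ 1} v(a n) / n (= lim_{n → ∞} v(a n)/n)`. -/
noncomputable def skewWald (w : ValuationOn S) (a : ℕ → Ideal S) : ℝ :=
  sInf {t : ℝ | ∃ n : ℕ, 0 < n ∧ t = (idealVal w (a n) : ℝ) / (n : ℝ)}

/-- `β_n^v(a, b) = inf { d ≥ 1 : v(a n) < v(b d) }`, with `inf ∅ = ∞`. -/
noncomputable def betaVal (w : ValuationOn S) (a b : ℕ → Ideal S) (n : ℕ) : ℕ∞ :=
  sInf {d : ℕ∞ | ∃ m : ℕ, 0 < m ∧ idealVal w (a n) < idealVal w (b m) ∧ d = (m : ℕ∞)}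

end Valuations

section Domains

/-- `S` is a finitely generated algebra over a field. -/
structure FieldBase (S : Type u) [CommRing S] where
  F : Type u
  [fld : Field F]
  [alg : Algebra F S]
  fg : Algebra.FiniteType F S

/-- `S` is finitely generated over a Noetherian integrally closed domain `R` with the
property that every finitely generated `R`-algebra (domain) has module-finite integral
closure (in its fraction field). -/
structure NagataBase (S : Type u) [CommRing S] where
  R : Type u
  [cring : CommRing R]
  [dom : IsDomain R]
  [noeth : IsNoetherianRing R]
  [intClosed : IsIntegrallyClosed R]
  [alg : Algebra R S]
  fg : Algebra.FiniteType R S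
  finiteIntegralClosure : ∀ (A : Type u) [CommRing A] [IsDomain A] [Algebra R A],
    Algebra.FiniteType R A → Module.Finite A (integralClosure A (FractionRing A))

/-- `S` is a complete local Noetherian ring, or finitely generated over a field or over `ℤ`,
or, more generally, finitely generated over a Noetherian integrally closed domain `R` such
that every finitely generated `R`-algebra has a module-finite integral closure. -/
def AdmissibleDomain (S : Type u) [CommRing S] : Prop :=
  (IsNoetherianRing S ∧ ∃ m : Ideal S, m.IsMaximal ∧ (∀ I : Ideal S, I.IsMaximal → I = m) ∧
    IsAdicComplete m S)
  ∨ Nonempty (FieldBase S) ∨ Algebra.FiniteType ℤ S ∨ Nonempty (NagataBase S)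

end Domains
section Aux
set_option linter.unusedSectionVars false

variable {S : Type u} [CommRing S] [IsDomain S]

/-- The valuation as a function on `S`. -/
noncomputable def vS (w : ValuationOn S) (x : S) : ℤ :=
  w.v (algebraMap S (FractionRing S) x)

lemma amap_ne {x : S} (hx : x ≠ 0) : algebraMap S (FractionRing S) x ≠ 0 :=
  fun h => hx ((map_eq_zero_iff _ (IsFractionRing.injective S (FractionRing S))).1 h)

lemma vS_mul (w : ValuationOn S) {x y : S} (hx : x ≠ 0) (hy : y ≠ 0) :
    vS w (x * y) = vS w x + vS w y := by
  unfold vS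
  rw [map_mul]
  exact w.map_mul _ _ (amap_ne hx) (amap_ne hy)

lemma vS_one (w : ValuationOn S) : vS w 1 = 0 := by
  have h := vS_mul w (one_ne_zero (α := S)) one_ne_zero
  rw [one_mul] at h
  omega

lemma vS_neg (w : ValuationOn S) {x : S} (hx : x ≠ 0) : vS w (-x) = vS w x := by
  have h1 : vS w ((-1 : S) * (-1)) = vS w (-1) + vS w (-1) :=
    vS_mul w (by simp) (by simp)
  rw [neg_one_mul, neg_neg, vS_one] at h1
  have h2 : vS w ((-1 : S) * x) = vS w (-1) + vS w x := vS_mul w (by simp) hx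
  rw [neg_one_mul] at h2
  omega

lemma vS_pow (w : ValuationOn S) {x : S} (hx : x ≠ 0) (n : ℕ) :
    vS w (x ^ n) = n * vS w x := by
  induction n with
  | zero => simpa using vS_one w
  | succ n ih =>
    rw [pow_succ, vS_mul w (pow_ne_zero n hx) hx, ih]
    push_cast; ring

lemma vS_min_le_add (w : ValuationOn S) {x y : S} (hx : x ≠ 0) (hy : y ≠ 0)
    (hxy : x + y ≠ 0) : min (vS w x) (vS w y) ≤ vS w (x + y) := by
  unfold vS
  rw [map_add]
  exact w.min_le_map_add _ _ (amap_ne hx) (amap_ne hy) (by rw [← map_add]; exact amap_ne hxy)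

lemma le_vS_add (w : ValuationOn S) {x y : S} {c : ℤ}
    (hx : x ≠ 0 → c ≤ vS w x) (hy : y ≠ 0 → c ≤ vS w y) (hxy : x + y ≠ 0) :
    c ≤ vS w (x + y) := by
  by_cases hx0 : x = 0
  · simpa [hx0] using hy (by simpa [hx0] using hxy)
  by_cases hy0 : y = 0
  · simpa [hy0] using hx (by simpa [hy0] using hxy)
  exact le_trans (le_min (hx hx0) (hy hy0)) (vS_min_le_add w hx0 hy0 hxy)

lemma idealVal_set (w : ValuationOn S) (I : Ideal S) :
    idealVal w I = sInf {m : ℤ | ∃ x ∈ I, x ≠ 0 ∧ vS w x = m} := rfl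

lemma idealVal_bddBelow (w : ValuationOn S) (hw : w.Supported) (I : Ideal S) :
    BddBelow {m : ℤ | ∃ x ∈ I, x ≠ 0 ∧ vS w x = m} :=
  ⟨0, fun _ ⟨x, _, hx0, hxm⟩ => hxm ▸ hw x hx0⟩

lemma idealVal_le (w : ValuationOn S) (hw : w.Supported) {I : Ideal S} {x : S}
    (hxI : x ∈ I) (hx0 : x ≠ 0) : idealVal w I ≤ vS w x :=
  csInf_le (idealVal_bddBelow w hw I) ⟨x, hxI, hx0, rfl⟩

lemma le_idealVal (w : ValuationOn S) {I : Ideal S} (hI : I ≠ ⊥) {c : ℤ}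
    (h : ∀ x ∈ I, x ≠ 0 → c ≤ vS w x) : c ≤ idealVal w I := by
  obtain ⟨x, hxI, hx0⟩ := Submodule.exists_mem_ne_zero_of_ne_bot hI
  exact le_csInf ⟨vS w x, x, hxI, hx0, rfl⟩ fun m ⟨y, hyI, hy0, hym⟩ => hym ▸ h y hyI hy0

lemma idealVal_nonneg (w : ValuationOn S) (hw : w.Supported) {I : Ideal S} (hI : I ≠ ⊥) :
    0 ≤ idealVal w I :=
  le_idealVal w hI fun x _ hx0 => hw x hx0

lemma exists_idealVal (w : ValuationOn S) (hw : w.Supported) {I : Ideal S} (hI : I ≠ ⊥) :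
    ∃ x ∈ I, x ≠ 0 ∧ vS w x = idealVal w I := by
  obtain ⟨x, hxI, hx0⟩ := Submodule.exists_mem_ne_zero_of_ne_bot hI
  have := Int.csInf_mem (s := {m : ℤ | ∃ x ∈ I, x ≠ 0 ∧ vS w x = m})
    ⟨vS w x, x, hxI, hx0, rfl⟩ (idealVal_bddBelow w hw I)
  obtain ⟨y, hyI, hy0, hy⟩ := this
  exact ⟨y, hyI, hy0, hy⟩

lemma idealVal_top (w : ValuationOn S) (hw : w.Supported) : idealVal w (⊤ : Ideal S) = 0 := by
  have h1 : idealVal w (⊤ : Ideal S) ≤ 0 := by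
    simpa [vS_one w] using idealVal_le w hw (I := ⊤) (x := 1) trivial one_ne_zero
  exact le_antisymm h1 (idealVal_nonneg w hw (fun h => one_ne_zero ((Submodule.eq_bot_iff _).1 h 1 trivial)))

lemma le_vS_of_mem_pow (w : ValuationOn S) (hw : w.Supported) (I : Ideal S) (i : ℕ) :
    ∀ y ∈ I ^ i, y ≠ 0 → (i : ℤ) * idealVal w I ≤ vS w y := by
  induction i with
  | zero => intro y _ hy; simpa [vS] using hw y hy
  | succ i ih =>
    intro y hy
    rw [pow_succ] at hy
    refine Submodule.mul_induction_on hy (fun m hm n hn hmn => ?_)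
      (fun x y hx hy' hxy => le_vS_add w hx hy' hxy)
    have hm0 : m ≠ 0 := fun h => hmn (by simp [h])
    have hn0 : n ≠ 0 := fun h => hmn (by simp [h])
    rw [vS_mul w hm0 hn0]
    have h1 := ih m hm hm0
    have h2 := idealVal_le w hw hn hn0
    push_cast
    linarith

lemma le_vS_sum (w : ValuationOn S) {ι : Type*} {c : ℤ} (s : Finset ι) (f : ι → S)
    (hf : ∀ i ∈ s, f i ≠ 0 → c ≤ vS w (f i)) (hs : ∑ i ∈ s, f i ≠ 0) :
    c ≤ vS w (∑ i ∈ s, f i) := by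
  induction s using Finset.cons_induction with
  | empty => simp at hs
  | cons i s hi ih =>
    rw [Finset.sum_cons] at hs ⊢
    exact le_vS_add w (hf i (Finset.mem_cons_self i s))
      (ih fun j hj => hf j (Finset.mem_cons_of_mem hj)) hs

lemma idealVal_le_of_mem_intClosure (w : ValuationOn S) (hw : w.Supported) {I : Ideal S} :
    ∀ x ∈ intClosure I, x ≠ 0 → idealVal w I ≤ vS w x := by
  intro x hx
  unfold intClosure at hx
  induction hx using Submodule.span_induction with
  | mem x hmem =>
    intro hx0
    obtain ⟨n, hn, c, hc, heq⟩ := hmem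
    by_contra hcon
    push_neg at hcon
    -- hcon : vS w x < idealVal w I
    have hterm : ∀ i ∈ Finset.Icc 1 n, c i * x ^ (n - i) ≠ 0 →
        (n : ℤ) * vS w x + 1 ≤ vS w (c i * x ^ (n - i)) := by
      intro i hi hne
      rw [Finset.mem_Icc] at hi
      have hci : c i ≠ 0 := fun h => hne (by simp [h])
      have hxp : x ^ (n - i) ≠ 0 := pow_ne_zero _ hx0
      rw [vS_mul w hci hxp, vS_pow w hx0]
      have h1 := le_vS_of_mem_pow w hw I i (c i) (hc i hi.1 hi.2) hci
      have hcast : ((n - i : ℕ) : ℤ) = (n : ℤ) - i := by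
        have := hi.2; push_cast [Nat.cast_sub this]; ring
      rw [hcast]
      have hi1 : (1 : ℤ) ≤ i := by exact_mod_cast hi.1
      nlinarith [hcon]
    have hsumne : ∑ i ∈ Finset.Icc 1 n, c i * x ^ (n - i) ≠ 0 := by
      intro h
      rw [h, add_zero] at heq
      exact pow_ne_zero n hx0 heq
    have hsum := le_vS_sum w _ _ hterm hsumne
    have heq2 : ∑ i ∈ Finset.Icc 1 n, c i * x ^ (n - i) = -(x ^ n) := by
      linear_combination heq
    rw [heq2, vS_neg w (pow_ne_zero n hx0), vS_pow w hx0] at hsum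
    omega
  | zero => intro h; exact absurd rfl h
  | add x y hx hy ihx ihy => exact fun h => le_vS_add w ihx ihy h
  | smul r x hx ihx =>
    intro h
    have hr : r ≠ 0 := fun hr => h (by simp [hr])
    have hx0 : x ≠ 0 := fun hx0 => h (by simp [hx0])
    have : r • x = r * x := rfl
    rw [this, vS_mul w hr hx0]
    have h1 : (0 : ℤ) ≤ vS w r := hw r hr
    have h2 := ihx hx0
    omega

end Aux
section Aux2
set_option linter.unusedSectionVars false
variable {S : Type u} [CommRing S] [IsDomain S]

/-- The sequence `n ↦ v(a n)` as a real sequence. -/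
noncomputable def uu (w : ValuationOn S) (a : ℕ → Ideal S) (n : ℕ) : ℝ :=
  (idealVal w (a n) : ℝ)

lemma anz_aux {a : ℕ → Ideal S} (ha : GradedFamily a) (hanz : ∀ i : ℕ, 1 ≤ i → a i ≠ ⊥)
    (n : ℕ) : a n ≠ ⊥ := by
  cases n with
  | zero => rw [ha.1]; exact fun h => one_ne_zero ((Submodule.eq_bot_iff _).1 h 1 trivial)
  | succ n => exact hanz (n + 1) (Nat.succ_le_succ (Nat.zero_le n))

lemma uu_nonneg (w : ValuationOn S) (hw : w.Supported) {a : ℕ → Ideal S}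
    (ha : GradedFamily a) (hanz : ∀ i : ℕ, 1 ≤ i → a i ≠ ⊥) (n : ℕ) : 0 ≤ uu w a n := by
  have h := idealVal_nonneg w hw (anz_aux ha hanz n)
  unfold uu
  exact_mod_cast h

lemma uu_subadditive (w : ValuationOn S) (hw : w.Supported) {a : ℕ → Ideal S}
    (ha : GradedFamily a) (hanz : ∀ i : ℕ, 1 ≤ i → a i ≠ ⊥) : Subadditive (uu w a) := by
  intro m n
  obtain ⟨x, hxI, hx0, hxv⟩ := exists_idealVal w hw (anz_aux ha hanz m)
  obtain ⟨y, hyI, hy0, hyv⟩ := exists_idealVal w hw (anz_aux ha hanz n)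
  have hxy : x * y ∈ a (m + n) := ha.2 m n (Ideal.mul_mem_mul hxI hyI)
  have h1 : idealVal w (a (m + n)) ≤ vS w (x * y) :=
    idealVal_le w hw hxy (mul_ne_zero hx0 hy0)
  rw [vS_mul w hx0 hy0, hxv, hyv] at h1
  unfold uu
  exact_mod_cast h1

lemma uu_bdd (w : ValuationOn S) (hw : w.Supported) {a : ℕ → Ideal S}
    (ha : GradedFamily a) (hanz : ∀ i : ℕ, 1 ≤ i → a i ≠ ⊥) :
    BddBelow (Set.range fun n : ℕ => uu w a n / n) := by
  refine ⟨0, fun x ⟨n, hn⟩ => ?_⟩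
  rw [← hn]
  exact div_nonneg (uu_nonneg w hw ha hanz n) (Nat.cast_nonneg n)

lemma skewWald_eq_lim (w : ValuationOn S) (hw : w.Supported) {a : ℕ → Ideal S}
    (ha : GradedFamily a) (hanz : ∀ i : ℕ, 1 ≤ i → a i ≠ ⊥) :
    skewWald w a = (uu_subadditive w hw ha hanz).lim := by
  rw [Subadditive.lim, skewWald]
  congr 1
  ext t
  constructor
  · rintro ⟨n, hn, rfl⟩
    exact ⟨n, hn, rfl⟩
  · rintro ⟨n, hn, rfl⟩
    exact ⟨n, hn, rfl⟩

lemma skewWald_tendsto (w : ValuationOn S) (hw : w.Supported) {a : ℕ → Ideal S}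
    (ha : GradedFamily a) (hanz : ∀ i : ℕ, 1 ≤ i → a i ≠ ⊥) :
    Tendsto (fun n : ℕ => uu w a n / n) atTop (nhds (skewWald w a)) := by
  rw [skewWald_eq_lim w hw ha hanz]
  exact (uu_subadditive w hw ha hanz).tendsto_lim (uu_bdd w hw ha hanz)

lemma skewWald_le (w : ValuationOn S) (hw : w.Supported) {a : ℕ → Ideal S}
    (ha : GradedFamily a) (hanz : ∀ i : ℕ, 1 ≤ i → a i ≠ ⊥) {n : ℕ} (hn : 0 < n) :
    skewWald w a ≤ uu w a n / n := by
  rw [skewWald_eq_lim w hw ha hanz]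
  exact (uu_subadditive w hw ha hanz).lim_le_div (uu_bdd w hw ha hanz) hn.ne'

lemma skewWald_nonneg (w : ValuationOn S) (hw : w.Supported) {a : ℕ → Ideal S}
    (ha : GradedFamily a) (hanz : ∀ i : ℕ, 1 ≤ i → a i ≠ ⊥) : 0 ≤ skewWald w a := by
  apply Real.sInf_nonneg
  rintro x ⟨n, hn, rfl⟩
  exact div_nonneg (by exact_mod_cast idealVal_nonneg w hw (anz_aux ha hanz n)) (Nat.cast_nonneg n)

end Aux2
section Aux3
set_option linter.unusedSectionVars false
variable {S : Type u} [CommRing S] [IsDomain S]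

lemma key_eventually (w : ValuationOn S) (hw : w.Supported) {a b : ℕ → Ideal S}
    (ha : GradedFamily a) (hb : GradedFamily b)
    (hanz : ∀ i : ℕ, 1 ≤ i → a i ≠ ⊥) (hbnz : ∀ i : ℕ, 1 ≤ i → b i ≠ ⊥)
    {s r : ℕ} (hs : 0 < s) (hr : 0 < r)
    (hlt : (s : ℝ) * skewWald w a < (r : ℝ) * skewWald w b) :
    ∀ᶠ t : ℕ in atTop, ¬ a (s * t) ≤ intClosure (b (r * t)) := by
  have hsR : (0 : ℝ) < s := by exact_mod_cast hs
  have hdiv : skewWald w a < (r : ℝ) * skewWald w b / s := by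
    rw [lt_div_iff₀ hsR]; linarith
  have hmul : Tendsto (fun t : ℕ => s * t) atTop atTop :=
    tendsto_atTop_mono (fun t => Nat.le_mul_of_pos_left t hs) tendsto_id
  have hcomp : Tendsto (fun t : ℕ => uu w a (s * t) / ((s * t : ℕ) : ℝ)) atTop
      (nhds (skewWald w a)) := (skewWald_tendsto w hw ha hanz).comp hmul
  filter_upwards [hcomp.eventually_lt_const hdiv, eventually_ge_atTop 1] with t hlt' ht hle
  have hst : 0 < s * t := Nat.mul_pos hs ht
  have hrt : 0 < r * t := Nat.mul_pos hr ht
  obtain ⟨z, hzI, hz0, hzv⟩ := exists_idealVal w hw (hanz (s * t) hst)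
  have h1 : idealVal w (b (r * t)) ≤ idealVal w (a (s * t)) := by
    rw [← hzv]
    exact idealVal_le_of_mem_intClosure w hw z (hle hzI) hz0
  have h3 : uu w b (r * t) ≤ uu w a (s * t) := by unfold uu; exact_mod_cast h1
  have hrtR : (0 : ℝ) < ((r * t : ℕ) : ℝ) := by exact_mod_cast hrt
  have h2 : ((r * t : ℕ) : ℝ) * skewWald w b ≤ uu w b (r * t) := by
    have h := skewWald_le w hw hb hbnz hrt
    rw [le_div_iff₀ hrtR] at h; linarith
  have hstR : (0 : ℝ) < ((s * t : ℕ) : ℝ) := by exact_mod_cast hst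
  have h4 : uu w a (s * t) < ((r : ℝ) * skewWald w b / s) * ((s * t : ℕ) : ℝ) :=
    (div_lt_iff₀ hstR).1 hlt'
  have hcast1 : ((r * t : ℕ) : ℝ) = (r : ℝ) * t := by push_cast; ring
  have hcast2 : ((s * t : ℕ) : ℝ) = (s : ℝ) * t := by push_cast; ring
  rw [hcast2] at h4
  rw [hcast1] at h2
  have heq : ((r : ℝ) * skewWald w b / s) * ((s : ℝ) * t) = (r : ℝ) * t * skewWald w b := by
    field_simp
  rw [heq] at h4
  linarith

end Aux3
/-- **Theorem (lower bound for the asymptotic resurgence via skew Waldschmidt constants).**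
Let `S` be a Noetherian domain with quotient field `K`, let `a`, `b` be graded families of
nonzero ideals in `S`, and let `v` be a valuation of `K` supported on `S` with `v̂(b) > 0`.
Then `v̂(b)/v̂(a) ≤ ρ̂(a, b̄)`; moreover, if `v̂(a) = 0` then `ρ̂(a, b̄) = ∞`. -/
theorem statement0 {S : Type u} [CommRing S] [IsDomain S] [IsNoetherianRing S]
    (a b : ℕ → Ideal S) (ha : GradedFamily a) (hb : GradedFamily b)
    (hanz : ∀ i : ℕ, 1 ≤ i → a i ≠ ⊥) (hbnz : ∀ i : ℕ, 1 ≤ i → b i ≠ ⊥)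
    (w : ValuationOn S) (hw : w.Supported) (hwb : 0 < skewWald w b) :
    (((skewWald w b / skewWald w a : ℝ)) : EReal) ≤
        asympResurgence a (fun i => intClosure (b i)) ∧
      (skewWald w a = 0 → asympResurgence a (fun i => intClosure (b i)) = ⊤) := by
  set T : Set EReal := {x : EReal | ∃ s r : ℕ, 0 < s ∧ 0 < r ∧
    (∀ᶠ t : ℕ in atTop, ¬ a (s * t) ≤ (fun i => intClosure (b i)) (r * t)) ∧
    x = (((s : ℝ) / (r : ℝ) : ℝ) : EReal)} with hT
  have hres : asympResurgence a (fun i => intClosure (b i)) = sSup T := rfl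
  have hmem : ∀ s r : ℕ, 0 < s → 0 < r →
      (s : ℝ) * skewWald w a < (r : ℝ) * skewWald w b →
      (((s : ℝ) / (r : ℝ) : ℝ) : EReal) ∈ T := by
    intro s r hs hr h
    exact ⟨s, r, hs, hr, by simpa using key_eventually w hw ha hb hanz hbnz hs hr h, rfl⟩
  have part2 : skewWald w a = 0 → asympResurgence a (fun i => intClosure (b i)) = ⊤ := by
    intro ha0
    rw [hres, sSup_eq_top]
    intro c hc
    obtain ⟨q, hq1, hq2⟩ := EReal.exists_rat_btwn_of_lt hc
    obtain ⟨n, hn⟩ := exists_nat_gt (q : ℝ)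
    refine ⟨((((n + 1 : ℕ) : ℝ) / ((1 : ℕ) : ℝ) : ℝ) : EReal), ?_, ?_⟩
    · refine hmem (n + 1) 1 (Nat.succ_pos n) one_pos ?_
      rw [ha0]
      simpa using hwb
    · refine lt_of_lt_of_le hq1 ?_
      rw [EReal.coe_le_coe_iff]
      have : ((n + 1 : ℕ) : ℝ) / ((1 : ℕ) : ℝ) = ((n + 1 : ℕ) : ℝ) := by simp
      rw [this]
      push_cast
      linarith
  refine ⟨?_, part2⟩
  rcases eq_or_lt_of_le (skewWald_nonneg w hw ha hanz) with ha0 | hapos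
  · rw [part2 ha0.symm]; exact le_top
  by_contra hcon
  have hρ : asympResurgence a (fun i => intClosure (b i)) <
      (((skewWald w b / skewWald w a : ℝ)) : EReal) := lt_of_not_ge hcon
  rw [hres] at hρ
  have hx : (0 : ℝ) < skewWald w b / skewWald w a := div_pos hwb hapos
  have hL : max (sSup T) (((0 : ℝ) : EReal)) <
      ((skewWald w b / skewWald w a : ℝ) : EReal) :=
    max_lt hρ (EReal.coe_lt_coe_iff.2 hx)
  obtain ⟨q, hq1, hq2⟩ := EReal.exists_rat_btwn_of_lt hL
  have hq0 : (0 : ℝ) < (q : ℝ) :=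
    EReal.coe_lt_coe_iff.1 (lt_of_le_of_lt (le_max_right _ _) hq1)
  have hqx : (q : ℝ) < skewWald w b / skewWald w a := EReal.coe_lt_coe_iff.1 hq2
  have hqpos : (0 : ℚ) < q := by exact_mod_cast hq0
  have hqnum : 0 < q.num := Rat.num_pos.2 hqpos
  set s : ℕ := q.num.toNat with hs_def
  set r : ℕ := q.den with hr_def
  have hsnum : ((s : ℤ)) = q.num := Int.toNat_of_nonneg hqnum.le
  have hs : 0 < s := by omega
  have hr : 0 < r := q.pos
  have hrR : (0 : ℝ) < (r : ℝ) := by exact_mod_cast hr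
  have hsr : ((s : ℝ) / (r : ℝ)) = (q : ℝ) := by
    rw [Rat.cast_def]
    congr 1
    exact_mod_cast hsnum
  have hqa : (q : ℝ) * skewWald w a < skewWald w b := (lt_div_iff₀ hapos).1 hqx
  have hsval : (s : ℝ) = (q : ℝ) * (r : ℝ) := by
    field_simp at hsr
    linarith [hsr]
  have hlt : (s : ℝ) * skewWald w a < (r : ℝ) * skewWald w b := by
    rw [hsval]
    calc (q : ℝ) * (r : ℝ) * skewWald w a = (r : ℝ) * ((q : ℝ) * skewWald w a) := by ring
    _ < (r : ℝ) * skewWald w b := by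
        exact (mul_lt_mul_iff_right₀ hrR).2 hqa
  have hle : ((q : ℝ) : EReal) ≤ sSup T := by
    rw [← hsr]
    exact le_sSup (hmem s r hs hr hlt)
  exact absurd (lt_of_le_of_lt (le_trans hle (le_max_left _ _)) hq1) (lt_irrefl _)
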